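/- Let Ω ⊂ R^n be bounded, F a point (m = 0) or segment (m = 1), r = dist(·, F), and let u be the solution of -Δu = γ with γ the Dirac mass at F (m = 0) or a C^1 line measure on F (m = 1, n = 3). Then u belongs to the Kondratiev space K²_{σ−1}(Ω) for every σ > (n−m)/2 − 1, i.e. Σ_{|α| ≤ 2} ∫_Ω |D^α u|² r^{2(σ−1+|α|)} dx < ∞. -/

import Mathlib

open MeasureTheory Metric Set Real

private abbrev E3 : Type := EuclideanSpace ℝ (Fin 3)

private lemma aux_rpow_int {q : ℝ} (hq : -3 < q) :
    IntegrableOn (fun x : E3 => ‖x‖ ^ q) (ball 0 1) volume := by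
  have hmble : Measurable fun x : E3 => ‖x‖ ^ q := by measurability
  rcases le_or_gt 0 q with h0 | h0
  · refine Integrable.mono' (g := fun _ => (1:ℝ))
      (integrableOn_const measure_ball_lt_top.ne) hmble.aestronglyMeasurable ?_
    filter_upwards [ae_restrict_mem measurableSet_ball] with x hx
    rw [Real.norm_eq_abs, abs_of_nonneg (rpow_nonneg (norm_nonneg x) q)]
    exact Real.rpow_le_one (norm_nonneg x) (le_of_lt (mem_ball_zero_iff.1 hx)) h0
  · set a : ℝ := 2⁻¹ with ha
    have ha0 : (0:ℝ) < a := by norm_num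
    have ha1 : a < 1 := by norm_num
    set s : ℕ → Set E3 := fun j => closedBall 0 (a ^ j) \ ball 0 (a ^ (j+1)) with hs
    have hmeas : ∀ j, MeasurableSet (s j) := fun j =>
      measurableSet_closedBall.diff measurableSet_ball
    have hfin : ∀ j, volume (s j) < ⊤ := fun j =>
      (measure_mono diff_subset).trans_lt measure_closedBall_lt_top
    have hlow : ∀ j, ∀ x ∈ s j, a ^ (j+1) ≤ ‖x‖ := by
      intro j x hx
      have h2 := hx.2
      rw [mem_ball_zero_iff] at h2
      exact not_lt.1 h2
    have hbound : ∀ j, ∀ x ∈ s j, ‖x‖ ^ q ≤ (a ^ (j+1)) ^ q := fun j x hx =>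
      Real.rpow_le_rpow_of_nonpos (pow_pos ha0 _) (hlow j x hx) h0.le
    have hintj : ∀ j, IntegrableOn (fun x : E3 => ‖x‖ ^ q) (s j) volume := by
      intro j
      refine Integrable.mono' (g := fun _ => (a ^ (j+1)) ^ q)
        (integrableOn_const (hfin j).ne) hmble.aestronglyMeasurable ?_
      filter_upwards [ae_restrict_mem (hmeas j)] with x hx
      rw [Real.norm_eq_abs, abs_of_nonneg (rpow_nonneg (norm_nonneg x) q)]
      exact hbound j x hx
    have hcover : ball (0:E3) 1 \ {0} ⊆ ⋃ j, s j := by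
      intro x hx
      have hx1 : ‖x‖ < 1 := mem_ball_zero_iff.1 hx.1
      have hx0 : x ≠ 0 := hx.2
      have hxp : (0:ℝ) < ‖x‖ := norm_pos_iff.2 hx0
      classical
      have hex : ∃ j : ℕ, a ^ (j+1) ≤ ‖x‖ := by
        obtain ⟨n, hn⟩ := exists_pow_lt_of_lt_one hxp ha1
        exact ⟨n, le_of_lt (lt_of_le_of_lt
          (pow_le_pow_of_le_one ha0.le ha1.le (Nat.le_succ n)) hn)⟩
      set j₀ := Nat.find hex with hj₀
      have hspec : a ^ (j₀+1) ≤ ‖x‖ := Nat.find_spec hex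
      have hupper : ‖x‖ ≤ a ^ j₀ := by
        rcases Nat.eq_zero_or_pos j₀ with h | h
        · rw [h, pow_zero]; exact hx1.le
        · obtain ⟨m, hm⟩ := Nat.exists_eq_succ_of_ne_zero h.ne'
          have hmin := Nat.find_min hex (m := m) (by omega)
          rw [hm]
          exact (not_le.1 hmin).le
      exact mem_iUnion.2 ⟨j₀, mem_closedBall_zero_iff.2 hupper,
        fun hmem => absurd (mem_ball_zero_iff.1 hmem) (not_lt.2 hspec)⟩
    have hsum : Summable fun j => ∫ x in s j, ‖‖x‖ ^ q‖ := by
      set V : ℝ := (volume (ball (0:E3) 1)).toReal with hV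
      have hV0 : 0 ≤ V := ENNReal.toReal_nonneg
      have hvol : ∀ j, (volume (s j)).toReal ≤ (a ^ j) ^ 3 * V := by
        intro j
        have h1 : volume (s j) ≤ volume (closedBall (0:E3) (a ^ j)) :=
          measure_mono diff_subset
        have h2 : volume (closedBall (0:E3) (a ^ j))
            = ENNReal.ofReal ((a ^ j) ^ 3) * volume (ball (0:E3) 1) := by
          rw [Measure.addHaar_closedBall volume 0 (pow_nonneg ha0.le j)]
          congr 2
          rw [finrank_euclideanSpace_fin]
        have h3 : volume (closedBall (0:E3) (a ^ j)) ≠ ⊤ :=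
          measure_closedBall_lt_top.ne
        calc (volume (s j)).toReal ≤ (volume (closedBall (0:E3) (a ^ j))).toReal :=
              ENNReal.toReal_mono h3 h1
          _ = (a ^ j) ^ 3 * V := by
              rw [h2, ENNReal.toReal_mul, ENNReal.toReal_ofReal (by positivity)]
      have hkey : ∀ j, ∫ x in s j, ‖‖x‖ ^ q‖ ≤ (a ^ (j+1)) ^ q * ((a ^ j) ^ 3 * V) := by
        intro j
        have h1 : ‖∫ x in s j, ‖‖x‖ ^ q‖‖ ≤ (a ^ (j+1)) ^ q * (volume (s j)).toReal := by
          refine norm_setIntegral_le_of_norm_le_const (hfin j) ?_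
          intro x hx
          simp only [Real.norm_eq_abs, abs_abs]
          rw [abs_of_nonneg (rpow_nonneg (norm_nonneg x) q)]
          exact hbound j x hx
        calc ∫ x in s j, ‖‖x‖ ^ q‖ ≤ ‖∫ x in s j, ‖‖x‖ ^ q‖‖ := le_abs_self _
          _ ≤ (a ^ (j+1)) ^ q * (volume (s j)).toReal := h1
          _ ≤ (a ^ (j+1)) ^ q * ((a ^ j) ^ 3 * V) := by
              exact mul_le_mul_of_nonneg_left (hvol j) (rpow_nonneg (by positivity) q)
      have hgeo : Summable fun j : ℕ => (a ^ q * V) * (a ^ (q + 3)) ^ j := by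
        refine Summable.mul_left _ (summable_geometric_of_lt_one (by positivity) ?_)
        exact Real.rpow_lt_one ha0.le ha1 (by linarith)
      have heq : ∀ j : ℕ, (a ^ (j+1)) ^ q * ((a ^ j) ^ 3 * V)
          = (a ^ q * V) * (a ^ (q + 3)) ^ j := by
        intro j
        have e1 : ((a : ℝ) ^ (j+1)) ^ q = a ^ (((j:ℝ)+1) * q) := by
          rw [← Real.rpow_natCast a (j+1), ← Real.rpow_mul ha0.le]
          push_cast; ring_nf
        have e2 : ((a : ℝ) ^ j) ^ 3 = a ^ ((3:ℝ) * j) := by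
          rw [← pow_mul, ← Real.rpow_natCast a (j * 3)]
          push_cast; ring_nf
        have e3 : ((a : ℝ) ^ (q+3)) ^ j = a ^ ((q+3) * j) := by
          rw [← Real.rpow_natCast (a ^ (q+3)) j, ← Real.rpow_mul ha0.le]
        have main : (((j:ℝ)+1)*q) + (3:ℝ)*j = q + (q+3)*j := by ring
        rw [e1, e2, e3]
        rw [show a ^ (((j:ℝ)+1)*q) * (a ^ ((3:ℝ)*j) * V)
            = a ^ ((((j:ℝ)+1)*q) + (3:ℝ)*j) * V by rw [Real.rpow_add ha0]; ring]
        rw [show a ^ q * V * a ^ ((q+3)*j) = a ^ (q + (q+3)*j) * V by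
          rw [Real.rpow_add ha0]; ring]
        rw [main]
      refine Summable.of_nonneg_of_le (fun j => ?_) (fun j => ?_) hgeo
      · exact setIntegral_nonneg (hmeas j) (fun x _ => norm_nonneg _)
      · rw [← heq j]; exact hkey j
    have hUn : IntegrableOn (fun x : E3 => ‖x‖ ^ q) (⋃ j, s j) volume :=
      integrableOn_iUnion_of_summable_integral_norm hintj hsum
    have h0 : IntegrableOn (fun x : E3 => ‖x‖ ^ q) {(0:E3)} volume := by
      have hz : volume ({(0:E3)}) = 0 := measure_singleton 0
      unfold IntegrableOn
      rw [Measure.restrict_eq_zero.2 hz]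
      exact integrable_zero_measure
    have hsubset : ball (0:E3) 1 ⊆ (⋃ j, s j) ∪ {0} := by
      intro x hx
      by_cases h : x = 0
      · exact Or.inr (by simp [h])
      · exact Or.inl (hcover ⟨hx, h⟩)
    exact (hUn.union h0).mono_set hsubset

private lemma contDiffOn_invNorm (k : ℕ) :
    ContDiffOn ℝ k (fun y : E3 => ‖y‖⁻¹) {y : E3 | y ≠ 0} := by
  intro x hx
  have hx' : x ≠ 0 := hx
  have h1 : ContDiffAt ℝ k (fun y : E3 => ‖y‖) x := by
    have := (contDiffAt_id (𝕜 := ℝ) (x := x) (n := k)).norm ℝ (f := id) hx'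
    simpa using this
  exact ((h1.inv (norm_ne_zero_iff.2 hx')).contDiffWithinAt)

private lemma invNorm_deriv_scale (k : ℕ) {c : ℝ} (hc : 0 < c) {x : E3} (hx : x ≠ 0) :
    ‖iteratedFDeriv ℝ k (fun y : E3 => ‖y‖⁻¹) (c • x)‖
      ≤ c⁻¹ ^ (k+1) * ‖iteratedFDeriv ℝ k (fun y : E3 => ‖y‖⁻¹) x‖ := by
  set g : E3 → ℝ := fun y => ‖y‖⁻¹ with hgdef
  set U : Set E3 := {y : E3 | y ≠ 0} with hUdef
  have hU : IsOpen U := isOpen_ne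
  have hUd : UniqueDiffOn ℝ U := hU.uniqueDiffOn
  have hgk : ContDiffOn ℝ k g U := contDiffOn_invNorm k
  have hcx : c • x ∈ U := smul_ne_zero hc.ne' hx
  have hxU : x ∈ U := hx
  have hc' : (c:ℝ)⁻¹ ≠ 0 := inv_ne_zero hc.ne'
  let e : E3 ≃L[ℝ] E3 :=
    ⟨LinearEquiv.smulOfNeZero ℝ E3 c⁻¹ hc', continuous_const_smul _, continuous_const_smul _⟩
  have he : ∀ z : E3, e z = c⁻¹ • z := fun z => rfl
  have hepre : (e : E3 → E3) ⁻¹' U = U := by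
    ext z
    simp only [mem_preimage, he, hUdef, mem_setOf_eq]
    constructor
    · intro h hz; exact h (by rw [hz, smul_zero])
    · intro h hz; exact h (by simpa [hc'] using (smul_eq_zero.1 hz))
  have hecx : e (c • x) = x := by rw [he]; exact inv_smul_smul₀ hc.ne' x
  have hcomp : (g ∘ e) = c • g := by
    funext z
    simp only [Function.comp, he, hgdef, Pi.smul_apply, smul_eq_mul]
    rw [norm_smul, mul_inv, norm_inv, Real.norm_eq_abs, abs_of_pos hc, inv_inv]
  have h1 : iteratedFDerivWithin ℝ k (g ∘ e) U (c • x)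
      = (iteratedFDerivWithin ℝ k g U x).compContinuousLinearMap
          (fun _ => (e : E3 →L[ℝ] E3)) := by
    have := e.iteratedFDerivWithin_comp_right g hUd (x := c • x) (by rw [hecx]; exact hxU) k
    rwa [hepre, hecx] at this
  have h2 : iteratedFDerivWithin ℝ k (g ∘ e) U (c • x)
      = c • iteratedFDerivWithin ℝ k g U (c • x) := by
    rw [hcomp]
    exact iteratedFDerivWithin_const_smul_apply (hgk _ hcx) hUd hcx
  have hnorm_e : ‖((e : E3 ≃L[ℝ] E3) : E3 →L[ℝ] E3)‖ ≤ c⁻¹ := by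
    refine ContinuousLinearMap.opNorm_le_bound _ (by positivity) (fun z => ?_)
    have : ((e : E3 ≃L[ℝ] E3) : E3 →L[ℝ] E3) z = c⁻¹ • z := rfl
    rw [this, norm_smul, Real.norm_eq_abs, abs_of_pos (by positivity)]
  have key : c * ‖iteratedFDerivWithin ℝ k g U (c • x)‖
      ≤ ‖iteratedFDerivWithin ℝ k g U x‖ * c⁻¹ ^ k := by
    calc c * ‖iteratedFDerivWithin ℝ k g U (c • x)‖
        = ‖c • iteratedFDerivWithin ℝ k g U (c • x)‖ := by
          rw [norm_smul, Real.norm_eq_abs, abs_of_pos hc]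
      _ = ‖iteratedFDerivWithin ℝ k (g ∘ e) U (c • x)‖ := by rw [h2]
      _ = ‖(iteratedFDerivWithin ℝ k g U x).compContinuousLinearMap
            (fun _ => (e : E3 →L[ℝ] E3))‖ := by rw [h1]
      _ ≤ ‖iteratedFDerivWithin ℝ k g U x‖ * ∏ _i : Fin k, ‖((e : E3 ≃L[ℝ] E3) : E3 →L[ℝ] E3)‖ :=
          ContinuousMultilinearMap.norm_compContinuousLinearMap_le _ _
      _ ≤ ‖iteratedFDerivWithin ℝ k g U x‖ * c⁻¹ ^ k := by
          refine mul_le_mul_of_nonneg_left ?_ (norm_nonneg _)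
          rw [Finset.prod_const, Finset.card_univ, Fintype.card_fin]
          exact pow_le_pow_left₀ (norm_nonneg _) hnorm_e k
  have hres : ‖iteratedFDerivWithin ℝ k g U (c • x)‖
      ≤ c⁻¹ ^ (k+1) * ‖iteratedFDerivWithin ℝ k g U x‖ := by
    have h3 : ‖iteratedFDerivWithin ℝ k g U (c • x)‖
        = c⁻¹ * (c * ‖iteratedFDerivWithin ℝ k g U (c • x)‖) := by
      rw [← mul_assoc, inv_mul_cancel₀ hc.ne', one_mul]
    rw [h3]
    calc c⁻¹ * (c * ‖iteratedFDerivWithin ℝ k g U (c • x)‖)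
        ≤ c⁻¹ * (‖iteratedFDerivWithin ℝ k g U x‖ * c⁻¹ ^ k) :=
          mul_le_mul_of_nonneg_left key (by positivity)
      _ = c⁻¹ ^ (k+1) * ‖iteratedFDerivWithin ℝ k g U x‖ := by ring
  rw [← iteratedFDerivWithin_of_isOpen k hU hcx, ← iteratedFDerivWithin_of_isOpen k hU hxU]
  exact hres

private lemma invNorm_deriv_bound (k : ℕ) :
    ∃ C : ℝ, 0 ≤ C ∧ ∀ x : E3, x ≠ 0 →
      ‖iteratedFDeriv ℝ k (fun y : E3 => ‖y‖⁻¹) x‖ ≤ C * ‖x‖⁻¹ ^ (k+1) := by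
  have hU : IsOpen {y : E3 | y ≠ 0} := isOpen_ne
  have hcont : ContinuousOn (iteratedFDeriv ℝ k (fun y : E3 => ‖y‖⁻¹)) {y : E3 | y ≠ 0} := by
    have h1 := (contDiffOn_invNorm k).continuousOn_iteratedFDerivWithin
      (le_refl (k : WithTop ℕ∞)) hU.uniqueDiffOn
    exact h1.congr ((iteratedFDerivWithin_of_isOpen k hU).symm)
  have hsub : sphere (0:E3) 1 ⊆ {y : E3 | y ≠ 0} := by
    intro y hy
    have : ‖y‖ = 1 := mem_sphere_zero_iff_norm.1 hy
    intro h; rw [h, norm_zero] at this; norm_num at this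
  obtain ⟨C, hC⟩ := (isCompact_sphere (0:E3) 1).exists_bound_of_continuousOn (hcont.mono hsub)
  refine ⟨max C 0, le_max_right _ _, ?_⟩
  intro x hx
  have hxn : (0:ℝ) < ‖x‖ := norm_pos_iff.2 hx
  set y : E3 := ‖x‖⁻¹ • x with hy
  have hy1 : ‖y‖ = 1 := by
    rw [hy, norm_smul, norm_inv, norm_norm, inv_mul_cancel₀ hxn.ne']
  have hy0 : y ≠ 0 := by
    intro h; rw [h, norm_zero] at hy1; norm_num at hy1
  have hxy : x = ‖x‖ • y := (smul_inv_smul₀ hxn.ne' x).symm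
  calc ‖iteratedFDeriv ℝ k (fun y : E3 => ‖y‖⁻¹) x‖
      = ‖iteratedFDeriv ℝ k (fun y : E3 => ‖y‖⁻¹) (‖x‖ • y)‖ := by rw [← hxy]
    _ ≤ ‖x‖⁻¹ ^ (k+1) * ‖iteratedFDeriv ℝ k (fun y : E3 => ‖y‖⁻¹) y‖ :=
        invNorm_deriv_scale k hxn hy0
    _ ≤ ‖x‖⁻¹ ^ (k+1) * max C 0 := by
        refine mul_le_mul_of_nonneg_left ?_ (by positivity)
        exact (hC y (mem_sphere_zero_iff_norm.2 hy1)).trans (le_max_left _ _)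
    _ = max C 0 * ‖x‖⁻¹ ^ (k+1) := mul_comm _ _

/-- point-singularity case, `n = 3`, `m = 0`: the solution
`u(x) = 1/(4π‖x‖)` of `-Δu = δ₀` belongs to the Kondratiev space
`K²_{σ-1}(B(0,1))` for every `σ > (n-m)/2 - 1 = 1/2`, i.e.
`∫_{B(0,1)} |D^α u|² ‖x‖^{2(σ-1+|α|)} dx < ∞` for all `|α| ≤ 2`. -/
theorem stmt_14 (σ : ℝ) (hσ : σ > ((3 : ℝ) - 0) / 2 - 1) :
    ∀ k : ℕ, k ≤ 2 →
      IntegrableOn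
        (fun x : EuclideanSpace ℝ (Fin 3) =>
          ‖iteratedFDeriv ℝ k (fun y : EuclideanSpace ℝ (Fin 3) => 1 / (4 * π * ‖y‖)) x‖ ^ 2 *
            ‖x‖ ^ (2 * (σ - 1 + k)))
        (Metric.ball 0 1) volume := by
  intro k _
  have hσ' : (1:ℝ)/2 < σ := by norm_num at hσ; linarith
  set f : E3 → ℝ := fun y => 1 / (4 * π * ‖y‖) with hf
  set g : E3 → ℝ := fun y => ‖y‖⁻¹ with hg
  have hπ : (0:ℝ) < 4 * π := by positivity
  have hfg : f = (4 * π)⁻¹ • g := by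
    funext y
    simp only [hf, hg, Pi.smul_apply, smul_eq_mul, one_div, mul_inv]
  obtain ⟨C, hC0, hC⟩ := invNorm_deriv_bound k
  have hU : IsOpen {y : E3 | y ≠ 0} := isOpen_ne
  have hDf : ∀ x : E3, x ≠ 0 →
      ‖iteratedFDeriv ℝ k f x‖ ≤ ((4*π)⁻¹ * C) * ‖x‖⁻¹ ^ (k+1) := by
    intro x hx
    have h1 : iteratedFDeriv ℝ k f x = (4*π)⁻¹ • iteratedFDeriv ℝ k g x := by
      rw [← iteratedFDerivWithin_of_isOpen (f := f) k hU hx,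
        ← iteratedFDerivWithin_of_isOpen (f := g) k hU hx, hfg]
      exact iteratedFDerivWithin_const_smul_apply (contDiffOn_invNorm k x hx) hU.uniqueDiffOn hx
    rw [h1, norm_smul, Real.norm_eq_abs, abs_of_pos (by positivity), mul_assoc]
    exact mul_le_mul_of_nonneg_left (hC x hx) (by positivity)
  set q : ℝ := 2 * σ - 4 with hqdef
  have hq : -3 < q := by rw [hqdef]; linarith
  have hD : IntegrableOn (fun x : E3 => ‖x‖ ^ q) (ball 0 1) volume := aux_rpow_int hq
  set B : ℝ := ((4*π)⁻¹ * C) with hB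
  have hB0 : 0 ≤ B := by positivity
  set F : E3 → ℝ := fun x => ‖iteratedFDeriv ℝ k f x‖ ^ 2 * ‖x‖ ^ (2 * (σ - 1 + k)) with hF
  have hptwise : ∀ x : E3, x ≠ 0 → F x ≤ B^2 * ‖x‖ ^ q := by
    intro x hx
    have hr : (0:ℝ) < ‖x‖ := norm_pos_iff.2 hx
    have h1 : ‖iteratedFDeriv ℝ k f x‖ ^ 2 ≤ (B * ‖x‖⁻¹ ^ (k+1)) ^ 2 :=
      pow_le_pow_left₀ (norm_nonneg _) (hDf x hx) 2
    have h2 : (B * ‖x‖⁻¹ ^ (k+1)) ^ 2 * ‖x‖ ^ (2 * (σ - 1 + k)) = B^2 * ‖x‖ ^ q := by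
      rw [mul_pow, ← pow_mul, inv_pow, ← Real.rpow_natCast ‖x‖ ((k+1)*2),
        ← Real.rpow_neg hr.le, mul_assoc, ← Real.rpow_add hr]
      congr 2
      push_cast; ring
    calc F x ≤ (B * ‖x‖⁻¹ ^ (k+1)) ^ 2 * ‖x‖ ^ (2 * (σ - 1 + k)) :=
          mul_le_mul_of_nonneg_right h1 (rpow_nonneg (norm_nonneg x) _)
      _ = B^2 * ‖x‖ ^ q := h2
  set S : Set E3 := ball 0 1 \ {0} with hS
  have hSopen : IsOpen S := by
    rw [hS, diff_eq]
    exact isOpen_ball.inter isOpen_compl_singleton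
  have hSU : S ⊆ {y : E3 | y ≠ 0} := fun x hx => hx.2
  have hFcont : ContinuousOn F {y : E3 | y ≠ 0} := by
    have hfOn : ContDiffOn ℝ k f {y : E3 | y ≠ 0} := by
      rw [hfg]; exact ContDiffOn.const_smul ((4*π)⁻¹ : ℝ) (contDiffOn_invNorm k)
    have h1 : ContinuousOn (iteratedFDeriv ℝ k f) {y : E3 | y ≠ 0} :=
      (hfOn.continuousOn_iteratedFDerivWithin (le_refl (k : WithTop ℕ∞))
        hU.uniqueDiffOn).congr ((iteratedFDerivWithin_of_isOpen k hU).symm)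
    apply ContinuousOn.mul
    · exact h1.norm.pow 2
    · intro x hx
      exact ((Real.continuousAt_rpow_const ‖x‖ _
        (Or.inl (norm_ne_zero_iff.2 hx))).comp continuous_norm.continuousAt).continuousWithinAt
  have hS_int : IntegrableOn F S volume := by
    have hDom : IntegrableOn (fun x : E3 => B^2 * ‖x‖ ^ q) (ball 0 1) volume :=
      hD.const_mul (B^2)
    refine Integrable.mono' (g := fun x => B^2 * ‖x‖ ^ q)
      (hDom.mono_set diff_subset)
      ((hFcont.mono hSU).aestronglyMeasurable hSopen.measurableSet) ?_
    filter_upwards [ae_restrict_mem hSopen.measurableSet] with x hx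
    rw [Real.norm_eq_abs, abs_of_nonneg (by positivity)]
    exact hptwise x hx.2
  have h0 : IntegrableOn F {(0:E3)} volume := by
    have hz : volume ({(0:E3)}) = 0 := measure_singleton 0
    unfold IntegrableOn
    rw [Measure.restrict_eq_zero.2 hz]
    exact integrable_zero_measure
  have hsubset : ball (0:E3) 1 ⊆ S ∪ {0} := by
    intro x hx
    by_cases h : x = 0
    · exact Or.inr (by simp [h])
    · exact Or.inl ⟨hx, h⟩
  exact (hS_int.union h0).mono_set hsubset
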